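/- Let Q(x) = √2/cosh(x), L⁻ u = −u'' + u − Q² u, L⁺ u = −u'' + u − 3Q² u, and let ε ∈ ℝ. Suppose σ ∈ ℂ and V₁, V₂ are complex-valued Schwartz functions on ℝ satisfying σ V₁ = L⁻ V₂ + ε² V₂ and σ V₂ = −(L⁺ V₁ + ε² V₁). Then Re σ · ( ∫_ℝ (|V₁'|² + |V₁|² − 3Q²|V₁|²) dx + ∫_ℝ (|V₂'|² + |V₂|² − Q²|V₂|²) dx + ε² ∫_ℝ (|V₁|² + |V₂|²) dx ) = 0. -/

import Mathlib

open MeasureTheory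

/-- The NLS ground state `Q(x) = √2 / cosh x`. -/
noncomputable def Q (x : ℝ) : ℝ := Real.sqrt 2 / Real.cosh x

namespace NLSConservationAux

lemma schwartz_bound (f : SchwartzMap ℝ ℂ) : ∃ C, ∀ x, ‖f x‖ ≤ C := by
  obtain ⟨C, hC⟩ := f.decay' 0 0
  exact ⟨C, fun x => by have h := hC x; simp at h; exact h⟩

lemma integrable_conj_mul (f g : SchwartzMap ℝ ℂ) :
    Integrable fun x => (starRingEnd ℂ) (f x) * g x := by
  obtain ⟨C, hC⟩ := schwartz_bound f
  exact g.integrable.bdd_mul ((continuous_star.comp f.continuous).aestronglyMeasurable)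
    (Filter.Eventually.of_forall fun x => by simpa using hC x)

lemma integrable_normsq (f : SchwartzMap ℝ ℂ) : Integrable fun x => ‖f x‖ ^ 2 := by
  have h := (integrable_conj_mul f f).norm
  have he : (fun x => ‖(starRingEnd ℂ) (f x) * f x‖) = fun x => ‖f x‖ ^ 2 := by
    funext x; simp [norm_mul, sq]
  rwa [he] at h

lemma integrable_coeff {c : ℝ → ℝ} (hc : Continuous c) {B : ℝ} (hB : ∀ x, |c x| ≤ B)
    (f : SchwartzMap ℝ ℂ) : Integrable fun x => c x * ‖f x‖ ^ 2 :=
  (integrable_normsq f).bdd_mul hc.aestronglyMeasurable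
    (Filter.Eventually.of_forall fun x => by simpa [Real.norm_eq_abs] using hB x)

lemma integrable_conj_mul_coeff {c : ℝ → ℝ} (hc : Continuous c) {B : ℝ} (hB : ∀ x, |c x| ≤ B)
    (f g : SchwartzMap ℝ ℂ) :
    Integrable fun x => (starRingEnd ℂ) (f x) * ((c x : ℂ) * g x) := by
  have h := (integrable_conj_mul f g).bdd_mul
    ((Complex.continuous_ofReal.comp hc).aestronglyMeasurable)
    (Filter.Eventually.of_forall fun x => by simpa using hB x)
  exact h.congr (Filter.Eventually.of_forall fun x => by
    simp only [Function.comp_apply]; ring)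

lemma zero_order (c : ℝ → ℝ) (f : SchwartzMap ℝ ℂ) :
    ∫ x, (starRingEnd ℂ) (f x) * ((c x : ℂ) * f x) = ((∫ x, c x * ‖f x‖ ^ 2 : ℝ) : ℂ) :=
  calc ∫ x, (starRingEnd ℂ) (f x) * ((c x : ℂ) * f x)
      = ∫ x, ((c x * ‖f x‖ ^ 2 : ℝ) : ℂ) := by
        congr 1; funext x
        have h : (starRingEnd ℂ) (f x) * ((c x : ℂ) * f x)
            = (c x : ℂ) * (f x * (starRingEnd ℂ) (f x)) := by ring
        rw [h, Complex.mul_conj]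
        norm_cast
        simp [Complex.normSq_eq_norm_sq]
    _ = ((∫ x, c x * ‖f x‖ ^ 2 : ℝ) : ℂ) := integral_ofReal

lemma conj_self_integral (f' : ℝ → ℂ) :
    ∫ x, (starRingEnd ℂ) (f' x) * f' x = ((∫ x, ‖f' x‖ ^ 2 : ℝ) : ℂ) :=
  calc ∫ x, (starRingEnd ℂ) (f' x) * f' x = ∫ x, ((‖f' x‖ ^ 2 : ℝ) : ℂ) := by
        congr 1; funext x
        rw [mul_comm, Complex.mul_conj]
        norm_cast
        simp [Complex.normSq_eq_norm_sq]
    _ = _ := integral_ofReal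

lemma deriv_eq (f : SchwartzMap ℝ ℂ) :
    deriv (⇑f) = ⇑(SchwartzMap.derivCLM ℝ ℂ f) := by
  funext x; exact (SchwartzMap.derivCLM_apply ℝ f x).symm

lemma iter2_eq (f : SchwartzMap ℝ ℂ) :
    iteratedDeriv 2 (⇑f) = ⇑(SchwartzMap.derivCLM ℝ ℂ (SchwartzMap.derivCLM ℝ ℂ f)) := by
  rw [iteratedDeriv_succ, iteratedDeriv_one, deriv_eq, deriv_eq]

lemma integrable_deriv_sq (f : SchwartzMap ℝ ℂ) :
    Integrable fun x => ‖deriv (⇑f) x‖ ^ 2 := by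
  rw [deriv_eq]; exact integrable_normsq _

lemma integrable_conj_mul_negiter (f : SchwartzMap ℝ ℂ) :
    Integrable fun x => (starRingEnd ℂ) (f x) * (-iteratedDeriv 2 (⇑f) x) := by
  have h := (integrable_conj_mul f (SchwartzMap.derivCLM ℝ ℂ (SchwartzMap.derivCLM ℝ ℂ f))).neg
  exact h.congr (Filter.Eventually.of_forall fun x => by
    simp only [Pi.neg_apply, iter2_eq]; ring)

lemma ibp (f : SchwartzMap ℝ ℂ) :
    ∫ x, (starRingEnd ℂ) (f x) * (-iteratedDeriv 2 (⇑f) x)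
      = ((∫ x, ‖deriv (⇑f) x‖ ^ 2 : ℝ) : ℂ) := by
  set f' := SchwartzMap.derivCLM ℝ ℂ f with hf'
  set f'' := SchwartzMap.derivCLM ℝ ℂ f' with hf''
  have hd1 : deriv (⇑f) = ⇑f' := deriv_eq f
  have hd2 : deriv (⇑f') = ⇑f'' := deriv_eq f'
  have hit : iteratedDeriv 2 (⇑f) = deriv (deriv (⇑f)) := by
    rw [iteratedDeriv_succ, iteratedDeriv_one]
  have hu : ∀ x, HasDerivAt (fun y => (starRingEnd ℂ) (f y)) ((starRingEnd ℂ) (f' x)) x := by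
    intro x
    have h0 : HasDerivAt (⇑f) (f' x) x := by
      have := (f.differentiableAt (x := x)).hasDerivAt
      rwa [show deriv (⇑f) x = f' x from congrFun hd1 x] at this
    exact h0.star
  have hv : ∀ x, HasDerivAt (deriv (⇑f)) (f'' x) x := by
    intro x
    rw [hd1]
    have := (f'.differentiableAt (x := x)).hasDerivAt
    rwa [show deriv (⇑f') x = f'' x from congrFun hd2 x] at this
  have key := MeasureTheory.integral_mul_deriv_eq_deriv_mul_of_integrable
    (u := fun y => (starRingEnd ℂ) (f y)) (v := deriv (⇑f))
    (u' := fun y => (starRingEnd ℂ) (f' y)) (v' := ⇑f'') (fun x _ => hu x) (fun x _ => hv x)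
    (by simpa [Pi.mul_def, hd1] using integrable_conj_mul f f'')
    (by simpa [Pi.mul_def, hd1] using integrable_conj_mul f' f')
    (by simpa [Pi.mul_def, hd1] using integrable_conj_mul f f')
  have step : ∫ x, (starRingEnd ℂ) (f x) * (-iteratedDeriv 2 (⇑f) x)
      = ∫ x, (starRingEnd ℂ) (f' x) * f' x := by
    rw [show (fun x => (starRingEnd ℂ) (f x) * (-iteratedDeriv 2 (⇑f) x))
        = fun x => -((starRingEnd ℂ) (f x) * f'' x) by
      funext x; rw [hit, hd1, hd2]; ring]
    rw [integral_neg, key, neg_neg]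
    simp only [hd1]
  rw [step, conj_self_integral, hd1]

lemma Q_cont : Continuous Q :=
  continuous_const.div Real.continuous_cosh fun x => (Real.cosh_pos x).ne'

lemma Q_sq_nonneg (x : ℝ) : 0 ≤ Q x ^ 2 := sq_nonneg _

lemma Q_sq_le (x : ℝ) : Q x ^ 2 ≤ 2 := by
  have hc : 1 ≤ Real.cosh x := Real.one_le_cosh x
  have h2 : Real.sqrt 2 ^ 2 = 2 := Real.sq_sqrt (by norm_num)
  have hcpos : (0 : ℝ) < Real.cosh x := Real.cosh_pos x
  rw [Q, div_pow, h2, div_le_iff₀ (by positivity)]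
  nlinarith

end NLSConservationAux

open NLSConservationAux

/-- Conservation law for the transverse eigenmode system of the cubic NLS:
if `σ V₁ = (L⁻ + ε²)V₂` and `σ V₂ = −(L⁺ + ε²)V₁` for Schwartz `V₁, V₂`, then
`Re σ · (⟨L⁺V₁,V₁⟩ + ⟨L⁻V₂,V₂⟩ + ε²(‖V₁‖² + ‖V₂‖²)) = 0`. -/
theorem nls_eigenmode_conservation_law (ε : ℝ) (σ : ℂ)
    (V₁ V₂ : SchwartzMap ℝ ℂ)
    (h₁ : ∀ x : ℝ, σ * V₁ x =
      (-iteratedDeriv 2 (⇑V₂) x + V₂ x - (Q x : ℂ) ^ 2 * V₂ x) + (ε : ℂ) ^ 2 * V₂ x)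
    (h₂ : ∀ x : ℝ, σ * V₂ x =
      -((-iteratedDeriv 2 (⇑V₁) x + V₁ x - 3 * (Q x : ℂ) ^ 2 * V₁ x) + (ε : ℂ) ^ 2 * V₁ x)) :
    σ.re * ((∫ x : ℝ, (‖deriv (⇑V₁) x‖ ^ 2 + ‖V₁ x‖ ^ 2 - 3 * (Q x) ^ 2 * ‖V₁ x‖ ^ 2))
      + (∫ x : ℝ, (‖deriv (⇑V₂) x‖ ^ 2 + ‖V₂ x‖ ^ 2 - (Q x) ^ 2 * ‖V₂ x‖ ^ 2))
      + ε ^ 2 * ∫ x : ℝ, (‖V₁ x‖ ^ 2 + ‖V₂ x‖ ^ 2)) = 0 := by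
  classical
  -- coefficient functions
  set c₁ : ℝ → ℝ := fun x => 1 - 3 * Q x ^ 2 + ε ^ 2 with hc₁def
  set c₂ : ℝ → ℝ := fun x => 1 - Q x ^ 2 + ε ^ 2 with hc₂def
  set c₁' : ℝ → ℝ := fun x => 1 - 3 * Q x ^ 2 with hc₁'def
  set c₂' : ℝ → ℝ := fun x => 1 - Q x ^ 2 with hc₂'def
  have hcont₁ : Continuous c₁ := by
    exact ((continuous_const.sub (continuous_const.mul (Q_cont.pow 2))).add continuous_const)
  have hcont₂ : Continuous c₂ := by
    exact ((continuous_const.sub (Q_cont.pow 2)).add continuous_const)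
  have hcont₁' : Continuous c₁' := continuous_const.sub (continuous_const.mul (Q_cont.pow 2))
  have hcont₂' : Continuous c₂' := continuous_const.sub (Q_cont.pow 2)
  have hb₁ : ∀ x, |c₁ x| ≤ 5 + ε ^ 2 := fun x => by
    simp only [hc₁def]
    exact abs_le.mpr ⟨by nlinarith [Q_sq_le x, Q_sq_nonneg x, sq_nonneg ε],
      by nlinarith [Q_sq_le x, Q_sq_nonneg x, sq_nonneg ε]⟩
  have hb₂ : ∀ x, |c₂ x| ≤ 5 + ε ^ 2 := fun x => by
    simp only [hc₂def]
    exact abs_le.mpr ⟨by nlinarith [Q_sq_le x, Q_sq_nonneg x, sq_nonneg ε],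
      by nlinarith [Q_sq_le x, Q_sq_nonneg x, sq_nonneg ε]⟩
  have hb₁' : ∀ x, |c₁' x| ≤ 5 := fun x => by
    simp only [hc₁'def]
    exact abs_le.mpr ⟨by nlinarith [Q_sq_le x, Q_sq_nonneg x],
      by nlinarith [Q_sq_le x, Q_sq_nonneg x]⟩
  have hb₂' : ∀ x, |c₂' x| ≤ 5 := fun x => by
    simp only [hc₂'def]
    exact abs_le.mpr ⟨by nlinarith [Q_sq_le x, Q_sq_nonneg x],
      by nlinarith [Q_sq_le x, Q_sq_nonneg x]⟩
  -- the inner product p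
  set p : ℂ := ∫ x, (starRingEnd ℂ) (V₂ x) * V₁ x with hpdef
  -- the complex identity for V₁ (using equation h₂)
  have hsplit₁ : ∫ x, (starRingEnd ℂ) (V₁ x) * (-(σ * V₂ x))
      = (((∫ x, ‖deriv (⇑V₁) x‖ ^ 2) + ∫ x, c₁ x * ‖V₁ x‖ ^ 2 : ℝ) : ℂ) := by
    have he : (fun x => (starRingEnd ℂ) (V₁ x) * (-(σ * V₂ x)))
        = fun x => (starRingEnd ℂ) (V₁ x) * (-iteratedDeriv 2 (⇑V₁) x)
          + (starRingEnd ℂ) (V₁ x) * ((c₁ x : ℂ) * V₁ x) := by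
      funext x
      rw [h₂ x, hc₁def]
      push_cast
      ring
    rw [he, integral_add (integrable_conj_mul_negiter V₁)
      (integrable_conj_mul_coeff hcont₁ hb₁ V₁ V₁), ibp V₁, zero_order c₁ V₁]
    push_cast
    ring
  have hsplit₂ : ∫ x, (starRingEnd ℂ) (V₂ x) * (σ * V₁ x)
      = (((∫ x, ‖deriv (⇑V₂) x‖ ^ 2) + ∫ x, c₂ x * ‖V₂ x‖ ^ 2 : ℝ) : ℂ) := by
    have he : (fun x => (starRingEnd ℂ) (V₂ x) * (σ * V₁ x))
        = fun x => (starRingEnd ℂ) (V₂ x) * (-iteratedDeriv 2 (⇑V₂) x)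
          + (starRingEnd ℂ) (V₂ x) * ((c₂ x : ℂ) * V₂ x) := by
      funext x
      rw [h₁ x, hc₂def]
      push_cast
      ring
    rw [he, integral_add (integrable_conj_mul_negiter V₂)
      (integrable_conj_mul_coeff hcont₂ hb₂ V₂ V₂), ibp V₂, zero_order c₂ V₂]
    push_cast
    ring
  -- rewrite the left-hand sides using p
  have hL₁ : ∫ x, (starRingEnd ℂ) (V₁ x) * (-(σ * V₂ x)) = -σ * (starRingEnd ℂ) p := by
    have he : (fun x => (starRingEnd ℂ) (V₁ x) * (-(σ * V₂ x)))
        = fun x => (-σ) * ((starRingEnd ℂ) (V₁ x) * V₂ x) := by funext x; ring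
    rw [he, integral_const_mul]
    congr 1
    rw [hpdef, ← integral_conj]
    congr 1; funext x; simp [mul_comm]
  have hL₂ : ∫ x, (starRingEnd ℂ) (V₂ x) * (σ * V₁ x) = σ * p := by
    have he : (fun x => (starRingEnd ℂ) (V₂ x) * (σ * V₁ x))
        = fun x => σ * ((starRingEnd ℂ) (V₂ x) * V₁ x) := by funext x; ring
    rw [he, integral_const_mul, hpdef]
  -- the key complex identity
  have hS : (((∫ x, ‖deriv (⇑V₁) x‖ ^ 2) + ∫ x, c₁ x * ‖V₁ x‖ ^ 2 : ℝ) : ℂ)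
        + (((∫ x, ‖deriv (⇑V₂) x‖ ^ 2) + ∫ x, c₂ x * ‖V₂ x‖ ^ 2 : ℝ) : ℂ)
      = σ * p + (-σ) * (starRingEnd ℂ) p := by
    rw [← hsplit₁, ← hsplit₂, hL₁, hL₂]
    ring
  -- split the real integrals to match the goal
  have hA₁ : (∫ x : ℝ, (‖deriv (⇑V₁) x‖ ^ 2 + ‖V₁ x‖ ^ 2 - 3 * (Q x) ^ 2 * ‖V₁ x‖ ^ 2))
      = (∫ x, ‖deriv (⇑V₁) x‖ ^ 2) + ∫ x, c₁' x * ‖V₁ x‖ ^ 2 := by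
    rw [← integral_add (integrable_deriv_sq V₁) (integrable_coeff hcont₁' hb₁' V₁)]
    congr 1; funext x; rw [hc₁'def]; ring
  have hA₂ : (∫ x : ℝ, (‖deriv (⇑V₂) x‖ ^ 2 + ‖V₂ x‖ ^ 2 - (Q x) ^ 2 * ‖V₂ x‖ ^ 2))
      = (∫ x, ‖deriv (⇑V₂) x‖ ^ 2) + ∫ x, c₂' x * ‖V₂ x‖ ^ 2 := by
    rw [← integral_add (integrable_deriv_sq V₂) (integrable_coeff hcont₂' hb₂' V₂)]
    congr 1; funext x; rw [hc₂'def]; ring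
  have hA₃ : (∫ x : ℝ, (‖V₁ x‖ ^ 2 + ‖V₂ x‖ ^ 2))
      = (∫ x, ‖V₁ x‖ ^ 2) + ∫ x, ‖V₂ x‖ ^ 2 :=
    integral_add (integrable_normsq V₁) (integrable_normsq V₂)
  have hb₁'' : (∫ x, c₁ x * ‖V₁ x‖ ^ 2)
      = (∫ x, c₁' x * ‖V₁ x‖ ^ 2) + ε ^ 2 * ∫ x, ‖V₁ x‖ ^ 2 := by
    rw [← integral_const_mul, ← integral_add (integrable_coeff hcont₁' hb₁' V₁)
      ((integrable_normsq V₁).const_mul (ε ^ 2))]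
    congr 1; funext x; rw [hc₁def, hc₁'def]; ring
  have hb₂'' : (∫ x, c₂ x * ‖V₂ x‖ ^ 2)
      = (∫ x, c₂' x * ‖V₂ x‖ ^ 2) + ε ^ 2 * ∫ x, ‖V₂ x‖ ^ 2 := by
    rw [← integral_const_mul, ← integral_add (integrable_coeff hcont₂' hb₂' V₂)
      ((integrable_normsq V₂).const_mul (ε ^ 2))]
    congr 1; funext x; rw [hc₂def, hc₂'def]; ring
  -- extract real and imaginary parts
  have hre := congrArg Complex.re hS
  have him := congrArg Complex.im hS
  simp only [Complex.ofReal_re, Complex.ofReal_im, Complex.add_re, Complex.add_im,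
    Complex.mul_re, Complex.mul_im, Complex.neg_re, Complex.neg_im,
    Complex.conj_re, Complex.conj_im] at hre him
  have hkey : σ.re * p.im = 0 := by linear_combination (-1/2 : ℝ) * him
  rw [hA₁, hA₂, hA₃]
  linear_combination (σ.re : ℝ) * hre - σ.re * hb₁'' - σ.re * hb₂'' - 2 * σ.im * hkey
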